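/- Let n ≥ 2 and let f ∈ ℂ[x₀,…,xₙ] be homogeneous of degree d such that V = V(f) ⊆ ℙⁿ has only isolated singularities and p = (1:0:⋯:0) is a singular point of V. Assume in addition that the n partial derivatives ∂₁f,…,∂ₙf have only finitely many common zeros in ℙⁿ (so that the ideal I = (∂₁f,…,∂ₙf) is a zero-dimensional complete intersection). If g(y₁,…,yₙ) = f(1,y₁,…,yₙ) belongs to the ideal (g₁,…,gₙ) of its partial derivatives in the localization of ℂ[y₁,…,yₙ] at (y₁,…,yₙ), then there exist a homogeneous polynomial h ∈ R with h(1,0,…,0) ≠ 0 and homogeneous polynomials a₁,…,aₙ ∈ R such that h·∂₀f = a₁∂₁f + ⋯ + aₙ∂ₙf; in particular (h, −a₁, …, −aₙ) is a Jacobian syzygy for f whose zeroth component does not vanish at p. -/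

import Mathlib

open MvPolynomial

noncomputable section

/-- Dehomogenization with respect to `x₀`: substitute `x₀ = 1`, `xᵢ = yᵢ`. -/
def deh (n : ℕ) : MvPolynomial (Fin (n + 1)) ℂ →ₐ[ℂ] MvPolynomial (Fin n) ℂ :=
  aeval (fun i => Fin.cases 1 (fun j => X j) i)

/-- The point `(1:0:⋯:0)`. -/
def pt (n : ℕ) : Fin (n + 1) → ℂ := fun i => if i = 0 then 1 else 0

/-- Saito's local condition at the origin: `g` lies in the ideal generated by its partial
derivatives in the localization of `ℂ[y₁,…,yₙ]` at the maximal ideal `(y₁,…,yₙ)`;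
equivalently, `u·g ∈ (g₁,…,gₙ)` for some polynomial `u` with `u(0) ≠ 0`. -/
def SaitoQH {n : ℕ} (g : MvPolynomial (Fin n) ℂ) : Prop :=
  ∃ u : MvPolynomial (Fin n) ℂ, eval (0 : Fin n → ℂ) u ≠ 0 ∧
    u * g ∈ Ideal.span (Set.range fun j : Fin n => pderiv j g)

/-! ### Auxiliary lemmas -/

lemma weight_degree {N : ℕ} (s : Fin N →₀ ℕ) :
    (Finsupp.weight (1 : Fin N → ℕ)) s = Finsupp.degree s :=
  (DFunLike.congr_fun Finsupp.degree_eq_weight_one s).symm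

lemma degree_single_one {N : ℕ} (i : Fin N) :
    Finsupp.degree (Finsupp.single i (1 : ℕ)) = 1 := by
  rw [← weight_degree, Finsupp.weight_apply, Finsupp.sum_single_index] <;> simp

lemma X_mul_pderiv_monomial {N : ℕ} (i : Fin N) (s : Fin N →₀ ℕ) (a : ℂ) :
    X i * pderiv i (monomial s a) = (s i) • monomial s a := by
  rw [pderiv_monomial]
  rcases Nat.eq_zero_or_pos (s i) with h | h
  · simp [h]
  · have hle : Finsupp.single i 1 ≤ s := by
      rw [Finsupp.single_le_iff]; exact h
    rw [X, monomial_mul, one_mul, add_tsub_cancel_of_le hle, smul_monomial]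
    congr 1
    rw [nsmul_eq_mul, mul_comm]

/-- Euler's identity for homogeneous polynomials. -/
lemma euler_id {N d : ℕ} {f : MvPolynomial (Fin N) ℂ} (hf : f.IsHomogeneous d) :
    ∑ i : Fin N, X i * pderiv i f = d • f := by
  conv_lhs => rw [← f.support_sum_monomial_coeff]
  conv_rhs => rw [← f.support_sum_monomial_coeff]
  rw [Finset.smul_sum]
  simp only [map_sum, Finset.mul_sum]
  rw [Finset.sum_comm]
  refine Finset.sum_congr rfl fun s hs => ?_
  simp only [X_mul_pderiv_monomial]
  rw [← Finset.sum_smul]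
  congr 1
  have hd := hf (mem_support_iff.mp hs)
  rw [weight_degree] at hd
  rw [← hd, Finsupp.degree]
  exact (Finset.sum_subset (Finset.subset_univ _) (fun x _ hx => by
    simpa using Finsupp.notMem_support_iff.mp hx)).symm

lemma pderiv_isHomogeneous {N d : ℕ} {f : MvPolynomial (Fin N) ℂ} (hf : f.IsHomogeneous d)
    (i : Fin N) : (pderiv i f).IsHomogeneous (d - 1) := by
  conv in pderiv i f => rw [← f.support_sum_monomial_coeff]
  rw [map_sum]
  refine IsHomogeneous.sum _ _ _ fun s hs => ?_
  rw [pderiv_monomial]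
  rcases Nat.eq_zero_or_pos (s i) with h | h
  · simp [h, isHomogeneous_zero]
  · apply isHomogeneous_monomial
    have hle : Finsupp.single i 1 ≤ s := by rw [Finsupp.single_le_iff]; exact h
    have hd : Finsupp.degree s = d := by rw [← weight_degree]; exact hf (mem_support_iff.mp hs)
    have hadd : Finsupp.degree (s - Finsupp.single i 1) + Finsupp.degree (Finsupp.single i 1)
        = Finsupp.degree s := by
      rw [← weight_degree, ← weight_degree, ← weight_degree, ← map_add,
        tsub_add_cancel_of_le hle]
    rw [degree_single_one] at hadd
    omega

/-- Scaling property of evaluation of homogeneous polynomials. -/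
lemma eval_smul_homog {N d : ℕ} {F : MvPolynomial (Fin N) ℂ} (hF : F.IsHomogeneous d)
    (c : ℂ) (v : Fin N → ℂ) : eval (c • v) F = c ^ d * eval v F := by
  conv_lhs => rw [← F.support_sum_monomial_coeff]
  conv_rhs => rw [← F.support_sum_monomial_coeff]
  rw [map_sum, map_sum, Finset.mul_sum]
  refine Finset.sum_congr rfl fun s hs => ?_
  rw [eval_monomial, eval_monomial]
  have hd : Finsupp.degree s = d := by rw [← weight_degree]; exact hF (mem_support_iff.mp hs)
  rw [← hd]
  simp only [Finsupp.prod, Pi.smul_apply, smul_eq_mul, mul_pow, Finset.prod_mul_distrib,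
    Finset.prod_pow_eq_pow_sum, Finsupp.degree_apply]
  ring

/-- Evaluation of the dehomogenization at the affine part of a point with `w 0 = 1`. -/
lemma eval_deh {n : ℕ} (F : MvPolynomial (Fin (n + 1)) ℂ) (w : Fin (n + 1) → ℂ)
    (hw : w 0 = 1) : eval (w ∘ Fin.succ) (deh n F) = eval w F := by
  have hdef : deh n F
      = eval₂ (algebraMap ℂ (MvPolynomial (Fin n) ℂ)) (fun i => Fin.cases 1 (fun j => X j) i) F := by
    rw [deh, aeval_def]
  rw [hdef, eval₂_comp_left (eval (w ∘ Fin.succ))]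
  have hfh : ((eval (w ∘ Fin.succ)).comp (algebraMap ℂ (MvPolynomial (Fin n) ℂ))) = RingHom.id ℂ := by
    ext a; simp [algebraMap_eq]
  have hgh : ((eval (w ∘ Fin.succ)) ∘ fun i => (Fin.cases 1 (fun j => X j) i : MvPolynomial (Fin n) ℂ)) = w := by
    funext i
    induction i using Fin.cases with
    | zero => simp [hw]
    | succ j => simp
  rw [hfh, hgh]
  rfl

/-- Dehomogenization is injective on homogeneous polynomials. -/
lemma deh_eq_zero {n d : ℕ} {F : MvPolynomial (Fin (n + 1)) ℂ} (hF : F.IsHomogeneous d)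
    (h : deh n F = 0) : F = 0 := by
  have hX : (X (0 : Fin (n + 1)) * F) = 0 := by
    apply IsHomogeneous.eq_zero_of_forall_eval_eq_zero
      ((isHomogeneous_X ℂ (0 : Fin (n + 1))).mul hF)
    intro v
    rw [eval_mul, eval_X]
    rcases eq_or_ne (v 0) 0 with h0 | h0
    · rw [h0, zero_mul]
    · set w : Fin (n + 1) → ℂ := (v 0)⁻¹ • v with hwdef
      have hw : w 0 = 1 := inv_mul_cancel₀ h0
      have hv : v = (v 0) • w := by
        funext i
        simp only [hwdef, Pi.smul_apply, smul_eq_mul]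
        rw [← mul_assoc, mul_inv_cancel₀ h0, one_mul]
      have heq : eval v F = (v 0) ^ d * eval w F := by
        conv_lhs => rw [hv]
        rw [eval_smul_homog hF]
      rw [heq, ← eval_deh F w hw, h]
      simp
  rcases mul_eq_zero.mp hX with h1 | h1
  · exact absurd h1 (X_ne_zero 0)
  · exact h1

/-- The chain rule for dehomogenization. -/
lemma deh_pderiv {n : ℕ} (j : Fin n) (f : MvPolynomial (Fin (n + 1)) ℂ) :
    deh n (pderiv j.succ f) = pderiv j (deh n f) := by
  induction f using MvPolynomial.induction_on with
  | C a => simp [deh]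
  | add p q hp hq => simp only [map_add, hp, hq]
  | mul_X p i hp =>
    rw [pderiv_mul, map_add, map_mul, map_mul, hp, map_mul, pderiv_mul]
    congr 1
    refine congrArg (deh n p * ·) ?_
    induction i using Fin.cases with
    | zero =>
      have h1 : deh n (X (0 : Fin (n + 1))) = 1 := by simp [deh]
      rw [pderiv_X_of_ne (Ne.symm (Fin.succ_ne_zero j)), h1, pderiv_one, map_zero]
    | succ k =>
      have h1 : deh n (X (Fin.succ k) : MvPolynomial (Fin (n + 1)) ℂ) = X k := by simp [deh]
      rcases eq_or_ne k j with hk | hk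
      · subst hk
        rw [h1, pderiv_X_self, pderiv_X_self, map_one]
      · rw [h1, pderiv_X_of_ne hk,
          pderiv_X_of_ne (fun hc => hk (Fin.succ_injective n hc)), map_zero]

/-- Homogenization to degree `e`. -/
def homogz (n e : ℕ) (g : MvPolynomial (Fin n) ℂ) : MvPolynomial (Fin (n + 1)) ℂ :=
  ∑ k ∈ Finset.range (e + 1), X 0 ^ (e - k) * rename Fin.succ (homogeneousComponent k g)

lemma homogz_isHomogeneous (n e : ℕ) (g : MvPolynomial (Fin n) ℂ) :
    (homogz n e g).IsHomogeneous e := by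
  refine IsHomogeneous.sum _ _ _ fun k hk => ?_
  have h1 := isHomogeneous_X_pow (R := ℂ) (0 : Fin (n + 1)) (e - k)
  have h2 : ((rename Fin.succ) (homogeneousComponent k g)).IsHomogeneous k :=
    (homogeneousComponent_isHomogeneous k g).rename_isHomogeneous
  have := h1.mul h2
  rwa [Nat.sub_add_cancel (Nat.lt_succ_iff.mp (Finset.mem_range.mp hk))] at this

lemma deh_homogz (n e : ℕ) (g : MvPolynomial (Fin n) ℂ) (hg : g.totalDegree ≤ e) :
    deh n (homogz n e g) = g := by
  rw [homogz, map_sum]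
  have hterm : ∀ k, deh n (X 0 ^ (e - k) * rename Fin.succ (homogeneousComponent k g))
      = homogeneousComponent k g := by
    intro k
    rw [map_mul, map_pow]
    have h0 : deh n (X 0) = 1 := by simp [deh]
    have h1 : deh n (rename Fin.succ (homogeneousComponent k g))
        = homogeneousComponent k g := by
      rw [deh, aeval_rename]
      have : ((fun i => Fin.cases 1 (fun j => X j) i) ∘ Fin.succ)
          = (X : Fin n → MvPolynomial (Fin n) ℂ) := by
        funext j; simp
      rw [this, aeval_X_left_apply]
    rw [h0, one_pow, one_mul, h1]
  simp only [hterm]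
  conv_rhs => rw [← sum_homogeneousComponent g]
  symm
  apply Finset.sum_subset
  · exact Finset.range_subset_range.mpr (by omega)
  · intro k _ hk
    refine homogeneousComponent_eq_zero k g ?_
    simp only [Finset.mem_range] at hk
    omega

lemma eval_pt_homogz (n e : ℕ) (g : MvPolynomial (Fin n) ℂ) :
    eval (pt n) (homogz n e g) = eval 0 g := by
  rw [homogz, map_sum]
  have hterm : ∀ k, eval (pt n) (X 0 ^ (e - k) * rename Fin.succ (homogeneousComponent k g))
      = if k = 0 then coeff 0 g else 0 := by
    intro k
    rw [eval_mul, eval_pow, eval_X, eval_rename]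
    have hpt : (pt n ∘ Fin.succ) = 0 := by
      funext j; simp [pt, Fin.succ_ne_zero]
    have hpt0 : pt n 0 = 1 := by simp [pt]
    rw [hpt0, one_pow, one_mul, hpt]
    rcases eq_or_ne k 0 with hk | hk
    · subst hk; rw [homogeneousComponent_zero]; simp
    · rw [if_neg hk]
      have h := (homogeneousComponent_isHomogeneous k g).coeff_eq_zero (d := 0) (by
        simpa using (Ne.symm hk))
      rw [eval_zero, constantCoeff_eq]
      exact h
  simp only [hterm]
  rw [Finset.sum_ite_eq' (Finset.range (e + 1)) 0 (fun _ => coeff 0 g)]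
  rw [if_pos (Finset.mem_range.mpr (Nat.succ_pos e)), eval_zero, constantCoeff_eq]

/-- The 'only if' direction of Theorem 3.1, in the coordinate system of its proof:
if the hypersurface `V(f)` has only isolated singularities, `p = (1:0:⋯:0)` is a singular
point, the `n` partials `∂₁f,…,∂ₙf` have only finitely many common zeros in `ℙⁿ`, and the
dehomogenization `g = f(1,y)` satisfies Saito's local condition, then there is a homogeneous
polynomial `h` with `h(p) ≠ 0` and homogeneous `a₁,…,aₙ` with `h·∂₀f = Σⱼ aⱼ·∂ⱼf`;
in particular `(h, −a₁, …, −aₙ)` is a Jacobian syzygy for `f` not vanishing at `p`. -/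
theorem stmt_5 (n d : ℕ) (hn : 2 ≤ n) (f : MvPolynomial (Fin (n + 1)) ℂ)
    (hf : f.IsHomogeneous d)
    (hiso : {P : Projectivization ℂ (Fin (n + 1) → ℂ) |
      ∀ i, eval P.rep (pderiv i f) = 0}.Finite)
    (hsing : ∀ i, eval (pt n) (pderiv i f) = 0)
    (hci : {P : Projectivization ℂ (Fin (n + 1) → ℂ) |
      ∀ j : Fin n, eval P.rep (pderiv j.succ f) = 0}.Finite)
    (hQH : SaitoQH (deh n f)) :
    ∃ (h : MvPolynomial (Fin (n + 1)) ℂ) (e : ℕ), h.IsHomogeneous e ∧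
      eval (pt n) h ≠ 0 ∧
      ∃ a : Fin n → MvPolynomial (Fin (n + 1)) ℂ,
        (∀ j, ∃ e' : ℕ, (a j).IsHomogeneous e') ∧
        h * pderiv 0 f = ∑ j, a j * pderiv j.succ f := by
  obtain ⟨u, hu0, hmem⟩ := hQH
  rcases Nat.eq_zero_or_pos d with hd | hd
  · subst hd
    have hf0 : pderiv (0 : Fin (n + 1)) f = 0 := by
      conv_lhs => rw [← f.support_sum_monomial_coeff]
      rw [map_sum]
      refine Finset.sum_eq_zero fun s hs => ?_
      have hd0 : Finsupp.degree s = 0 := by rw [← weight_degree]; exact hf (mem_support_iff.mp hs)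
      have hs0 : s 0 = 0 := by
        have := Finsupp.le_degree (0 : Fin (n + 1)) s
        omega
      rw [pderiv_monomial, hs0]
      simp
    exact ⟨1, 0, isHomogeneous_one _ _, by simp, 0,
      fun j => ⟨0, by simpa using isHomogeneous_zero (Fin (n + 1)) ℂ 0⟩, by simp [hf0]⟩
  · obtain ⟨b, hb⟩ := (Submodule.mem_span_range_iff_exists_fun _).mp hmem
    set e := u.totalDegree + ∑ j, (b j).totalDegree with he
    have hue : u.totalDegree ≤ e := Nat.le_add_right _ _
    have hbe : ∀ j, (b j).totalDegree ≤ e + 1 := fun j =>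
      le_trans (le_trans (Finset.single_le_sum (f := fun j => (b j).totalDegree)
        (fun _ _ => Nat.zero_le _) (Finset.mem_univ j)) (Nat.le_add_left _ _)) (Nat.le_succ _)
    set H := homogz n e u with hH
    set A : Fin n → MvPolynomial (Fin (n + 1)) ℂ := fun j => homogz n (e + 1) (b j) with hA
    have hHhom : H.IsHomogeneous e := homogz_isHomogeneous n e u
    have hAhom : ∀ j, (A j).IsHomogeneous (e + 1) := fun j => homogz_isHomogeneous _ _ _
    have key : H * f = ∑ j, A j * pderiv (Fin.succ j) f := by
      have hhom : (H * f - ∑ j, A j * pderiv (Fin.succ j) f).IsHomogeneous (e + d) := by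
        refine (hHhom.mul hf).sub (IsHomogeneous.sum _ _ _ fun j _ => ?_)
        have h2 := (hAhom j).mul (pderiv_isHomogeneous hf j.succ)
        have heq : (e + 1) + (d - 1) = e + d := by omega
        rwa [heq] at h2
      have hdeh : deh n (H * f - ∑ j, A j * pderiv (Fin.succ j) f) = 0 := by
        rw [map_sub, map_mul, hH, deh_homogz n e u hue, map_sum]
        have hterm : ∀ j ∈ Finset.univ,
            deh n (A j * pderiv (Fin.succ j) f) = b j * pderiv j (deh n f) := by
          intro j _
          rw [hA, map_mul, deh_homogz n (e + 1) (b j) (hbe j), deh_pderiv]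
        rw [Finset.sum_congr rfl hterm,
          show ∑ j, b j * pderiv j (deh n f) = u * deh n f by simpa [smul_eq_mul] using hb]
        ring
      exact sub_eq_zero.mp (deh_eq_zero hhom hdeh)
    have heuler := euler_id hf
    rw [Fin.sum_univ_succ] at heuler
    refine ⟨X 0 * H, e + 1, ?_, ?_, fun j => C (d : ℂ) * A j - H * X (Fin.succ j),
      fun j => ⟨e + 1, ?_⟩, ?_⟩
    · have h3 := hHhom.mul (isHomogeneous_X ℂ (0 : Fin (n + 1)))
      rwa [mul_comm H (X 0)] at h3
    · rw [eval_mul, eval_X, hH, eval_pt_homogz]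
      have hpt0 : pt n 0 = 1 := by simp [pt]
      rw [hpt0, one_mul]
      exact hu0
    · exact ((hAhom j).C_mul (d : ℂ)).sub (hHhom.mul (isHomogeneous_X ℂ _))
    · have hx0 : X (0 : Fin (n + 1)) * pderiv 0 f
          = d • f - ∑ j : Fin n, X (Fin.succ j) * pderiv (Fin.succ j) f :=
        eq_sub_of_add_eq heuler
      have hds : (d • f : MvPolynomial (Fin (n + 1)) ℂ) = C (d : ℂ) * f := by
        rw [nsmul_eq_mul, C_eq_coe_nat]
      calc (X 0 * H) * pderiv 0 f = H * (X 0 * pderiv 0 f) := by ring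
        _ = C (d : ℂ) * (H * f) - ∑ j, H * (X (Fin.succ j) * pderiv (Fin.succ j) f) := by
            rw [hx0, hds, mul_sub, Finset.mul_sum]; ring_nf
        _ = C (d : ℂ) * ∑ j, A j * pderiv (Fin.succ j) f
            - ∑ j, H * (X (Fin.succ j) * pderiv (Fin.succ j) f) := by rw [key]
        _ = ∑ j, (C (d : ℂ) * A j - H * X (Fin.succ j)) * pderiv (Fin.succ j) f := by
            rw [Finset.mul_sum, ← Finset.sum_sub_distrib]
            exact Finset.sum_congr rfl fun j _ => by ring
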